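/- Let (V,g) be a real vector space of dimension ≥ 3 with a positive definite inner product g, and let h ⊆ co(V) be a Lie subalgebra. If there exists a nonzero linear form ξ ∈ V* such that T^ξ belongs to the first prolongation of h, then h = co(V). (Hence every proper subalgebra of co(V) has trivial first prolongation in the Riemannian case.) -/

import Mathlib

/-- The conformal Killing endomorphism `T^ξ_X` associated to the 1-form `ξ = g(s,·)`
(with `ξ♯ = s`): `Z ↦ ξ(X) Z + ξ(Z) X − g(X,Z) ξ♯`. -/
noncomputable def Txi {V : Type*} [AddCommGroup V] [Module ℝ V]
    (g : LinearMap.BilinForm ℝ V) (s X : V) : Module.End ℝ V :=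
  g s X • (LinearMap.id : V →ₗ[ℝ] V) + (g s).smulRight X - (g X).smulRight s

/-- `A` belongs to the conformal linear Lie algebra `co(V) = ℝ·id ⊕ so(V)`. -/
def IsConf {V : Type*} [AddCommGroup V] [Module ℝ V]
    (g : LinearMap.BilinForm ℝ V) (A : Module.End ℝ V) : Prop :=
  ∃ c : ℝ, ∀ X Y : V, g (A X) Y + g X (A Y) = 2 * c * g X Y

attribute [local instance 100] LieRing.ofAssociativeRing

/-- In the Riemannian (positive definite) case, if a Lie subalgebra `h ⊆ co(V)`
(`dim V ≥ 3`) has `T^ξ` in its first prolongation for some nonzero `ξ`, then `h = co(V)`;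
hence every proper subalgebra of `co(V)` has trivial first prolongation. -/
theorem riemannian_subalgebra_with_nontrivial_prolongation_is_co
    {V : Type*} [AddCommGroup V] [Module ℝ V] [FiniteDimensional ℝ V]
    (g : LinearMap.BilinForm ℝ V) (hsymm : g.IsSymm)
    (hpos : ∀ x : V, x ≠ 0 → 0 < g x x)
    (hdim : 3 ≤ Module.finrank ℝ V)
    (h : LieSubalgebra ℝ (Module.End ℝ V))
    (hco : ∀ A ∈ h, IsConf g A)
    (s : V) (hs : s ≠ 0)
    (hT : ∀ X : V, Txi g s X ∈ h) :
    ∀ A : Module.End ℝ V, A ∈ h ↔ IsConf g A := by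
  have hss : (0:ℝ) < g s s := hpos s hs
  have hnd : g.Nondegenerate := by
    constructor <;> intro x hx <;> by_contra h0 <;> exact (hpos x h0).ne' (hx x)
  -- the skew "wedge" endomorphism
  set S : V → V → Module.End ℝ V :=
    fun a b => (g a).smulRight b - (g b).smulRight a with hSdef
  -- identity is in h
  have hTs : Txi g s s = g s s • (LinearMap.id : V →ₗ[ℝ] V) := by
    simp [Txi]
  have hid : (LinearMap.id : V →ₗ[ℝ] V) ∈ h := by
    have : (g s s)⁻¹ • Txi g s s ∈ h := h.smul_mem _ (hT s)
    rwa [hTs, smul_smul, inv_mul_cancel₀ hss.ne', one_smul] at this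
  -- S s X ∈ h
  have hSs : ∀ X : V, S s X ∈ h := by
    intro X
    have : Txi g s X - g s X • (LinearMap.id : V →ₗ[ℝ] V) ∈ h :=
      h.sub_mem (hT X) (h.smul_mem _ hid)
    have e : Txi g s X - g s X • (LinearMap.id : V →ₗ[ℝ] V) = S s X := by
      simp [Txi, hSdef]; abel
    rwa [e] at this
  -- bracket identity
  have hbr : ∀ X Y : V,
      ⁅S s X, S s Y⁆ = g s s • S X Y + g s Y • S s X - g s X • S s Y := by
    intro X Y
    ext Z
    have h1 : g X s = g s X := (hsymm.eq s X).symm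
    have h2 : g Y s = g s Y := (hsymm.eq s Y).symm
    have h3 : g Y X = g X Y := (hsymm.eq X Y).symm
    simp only [hSdef, Ring.lie_def, LinearMap.sub_apply, LinearMap.add_apply,
      LinearMap.smul_apply, Module.End.mul_apply, LinearMap.smulRight_apply,
      map_sub, map_smul, smul_eq_mul, smul_sub, smul_smul, h1, h2, h3]
    module
  -- all S X Y ∈ h
  have hSall : ∀ X Y : V, S X Y ∈ h := by
    intro X Y
    have hm : (g s s)⁻¹ • (⁅S s X, S s Y⁆ - g s Y • S s X + g s X • S s Y) ∈ h :=
      h.smul_mem _ (h.add_mem (h.sub_mem (h.lie_mem (hSs X) (hSs Y))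
        (h.smul_mem _ (hSs X))) (h.smul_mem _ (hSs Y)))
    have e : (g s s)⁻¹ • (⁅S s X, S s Y⁆ - g s Y • S s X + g s X • S s Y) = S X Y := by
      rw [hbr]
      have e0 : g s s • S X Y + g s Y • S s X - g s X • S s Y - g s Y • S s X
          + g s X • S s Y = g s s • S X Y := by abel
      rw [e0, smul_smul, inv_mul_cancel₀ hss.ne', one_smul]
    rwa [e] at hm
  -- every skew endomorphism is in h
  have hskew : ∀ A : Module.End ℝ V,
      (∀ X Y : V, g (A X) Y + g X (A Y) = 0) → A ∈ h := by
    intro A hA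
    let b := Module.finBasis ℝ V
    let d := g.dualBasis hnd b
    have key : (2:ℝ) • A = ∑ i, S (d i) (A (b i)) := by
      ext Z
      have hrepr : ∀ W : V, W = ∑ i, g W (b i) • d i := by
        intro W
        conv_lhs => rw [← (d).sum_repr W]
        refine Finset.sum_congr rfl fun i _ => ?_
        rw [LinearMap.BilinForm.dualBasis_repr_apply]
      have hrepr' : Z = ∑ i, g Z (d i) • b i := by
        conv_lhs => rw [← b.sum_repr Z]
        refine Finset.sum_congr rfl fun i _ => ?_
        congr 1
        have : g.dualBasis hnd d = b := g.dualBasis_dualBasis hnd hsymm b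
        conv_lhs => rw [← this]
        rw [LinearMap.BilinForm.dualBasis_repr_apply]
      have e1 : ∑ i, g (d i) Z • A (b i) = A Z := by
        rw [show ∑ i, g (d i) Z • A (b i) = A (∑ i, g (d i) Z • b i) by
          rw [map_sum]; exact Finset.sum_congr rfl fun i _ => (map_smul A _ _).symm]
        congr 1
        conv_rhs => rw [hrepr' ]
        exact Finset.sum_congr rfl fun i _ => by rw [hsymm.eq (d i) Z]
      have e2 : ∑ i, g (A (b i)) Z • d i = -(A Z) := by
        have key2 : ∀ i, g (A (b i)) Z = -(g (A Z) (b i)) := by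
          intro i
          have h1 := hA Z (b i)
          have h3 : g Z (A (b i)) = g (A (b i)) Z := (hsymm.eq _ _)
          linarith
        simp_rw [key2, neg_smul, Finset.sum_neg_distrib]
        exact congrArg Neg.neg (hrepr (A Z)).symm
      simp only [LinearMap.smul_apply, LinearMap.sum_apply, hSdef,
        LinearMap.sub_apply, LinearMap.smulRight_apply, Finset.sum_sub_distrib,
        e1, e2, smul_eq_mul]
      module
    have hmem : ∑ i, S (d i) (A (b i)) ∈ h := by
      refine Submodule.sum_mem h.toSubmodule fun i _ => ?_
      exact hSall _ _
    have : (2:ℝ)⁻¹ • ((2:ℝ) • A) ∈ h := by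
      rw [key]; exact h.smul_mem _ hmem
    rwa [smul_smul, inv_mul_cancel₀ (two_ne_zero), one_smul] at this
  intro A
  constructor
  · exact hco A
  · rintro ⟨c, hc⟩
    have hskewpart : A - c • (LinearMap.id : V →ₗ[ℝ] V) ∈ h := by
      refine hskew _ fun X Y => ?_
      have e1 : g (A X - c • X) Y = g (A X) Y - c * g X Y := by
        simp [map_sub, map_smul]
      have e2 : g X (A Y - c • Y) = g X (A Y) - c * g X Y := by
        simp [map_sub, map_smul]
      simp only [LinearMap.sub_apply, LinearMap.smul_apply, LinearMap.id_coe, id_eq]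
      rw [e1, e2]
      linarith [hc X Y]
    have : (A - c • (LinearMap.id : V →ₗ[ℝ] V)) + c • (LinearMap.id : V →ₗ[ℝ] V) ∈ h :=
      h.add_mem hskewpart (h.smul_mem _ hid)
    rwa [sub_add_cancel] at this
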